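/- For any quaternion vectors p, q : Fin n → ℍ, the sum over μ ∈ {1, i, j, k} of ∑_{l} conj((p_l)^μ) · (q_l)^μ equals 4·re(∑_{l} conj(p_l) · q_l), coerced into ℍ; i.e., the augmented quaternion vectors satisfy p_H^H q_H = 4 Re{p^H q}. -/

import Mathlib

open Quaternion

noncomputable def qI : ℍ[ℝ] := ⟨0, 1, 0, 0⟩
noncomputable def qJ : ℍ[ℝ] := ⟨0, 0, 1, 0⟩
noncomputable def qK : ℍ[ℝ] := ⟨0, 0, 0, 1⟩

/-- The quaternion involution `q^μ = μ q μ⁻¹ = -μ q μ` for a pure unit quaternion `μ`. -/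
noncomputable def qInv (μ q : ℍ[ℝ]) : ℍ[ℝ] := -(μ * q * μ)

lemma qI_re : (qI : ℍ[ℝ]).re = 0 := rfl
lemma qI_imI : (qI : ℍ[ℝ]).imI = 1 := rfl
lemma qI_imJ : (qI : ℍ[ℝ]).imJ = 0 := rfl
lemma qI_imK : (qI : ℍ[ℝ]).imK = 0 := rfl
lemma qJ_re : (qJ : ℍ[ℝ]).re = 0 := rfl
lemma qJ_imI : (qJ : ℍ[ℝ]).imI = 0 := rfl
lemma qJ_imJ : (qJ : ℍ[ℝ]).imJ = 1 := rfl
lemma qJ_imK : (qJ : ℍ[ℝ]).imK = 0 := rfl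
lemma qK_re : (qK : ℍ[ℝ]).re = 0 := rfl
lemma qK_imI : (qK : ℍ[ℝ]).imI = 0 := rfl
lemma qK_imJ : (qK : ℍ[ℝ]).imJ = 0 := rfl
lemma qK_imK : (qK : ℍ[ℝ]).imK = 1 := rfl

set_option maxHeartbeats 4000000 in
lemma key (a b : ℍ[ℝ]) :
    star a * b + star (qInv qI a) * qInv qI b + star (qInv qJ a) * qInv qJ b
      + star (qInv qK a) * qInv qK b = ((4 * (star a * b).re : ℝ) : ℍ[ℝ]) := by
  simp only [qInv]
  ext <;>
    simp [Quaternion.re_mul, Quaternion.imI_mul, Quaternion.imJ_mul, Quaternion.imK_mul,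
      QuaternionAlgebra.re_mul, QuaternionAlgebra.imI_mul, QuaternionAlgebra.imJ_mul,
      QuaternionAlgebra.imK_mul, qI_re, qI_imI, qI_imJ, qI_imK, qJ_re, qJ_imI, qJ_imJ, qJ_imK,
      qK_re, qK_imI, qK_imJ, qK_imK] <;>
    ring

/-- `p_H^H q_H = 4 Re{p^H q}`: the sum over `μ ∈ {1,i,j,k}` of
`∑ l, conj((p l)^μ) * (q l)^μ` equals `4 Re{∑ l, conj(p l) * q l}`, coerced into ℍ. -/
theorem augmented_conjTranspose_dot (n : ℕ) (p q : Fin n → ℍ[ℝ]) :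
    (∑ l, star (p l) * q l)
      + (∑ l, star (qInv qI (p l)) * qInv qI (q l))
      + (∑ l, star (qInv qJ (p l)) * qInv qJ (q l))
      + (∑ l, star (qInv qK (p l)) * qInv qK (q l))
    = ((4 * (∑ l, star (p l) * q l).re : ℝ) : ℍ[ℝ]) := by
  have hre : (∑ l, star (p l) * q l).re = ∑ l, (star (p l) * q l).re :=
    map_sum (show ℍ[ℝ] →ₗ[ℝ] ℝ from QuaternionAlgebra.reₗ _ _ _) _ _
  have hcoe : ((4 * (∑ l, star (p l) * q l).re : ℝ) : ℍ[ℝ])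
      = ∑ l, ((4 * (star (p l) * q l).re : ℝ) : ℍ[ℝ]) := by
    rw [hre, Finset.mul_sum, ← Quaternion.algebraMap_def, map_sum]
  rw [hcoe, ← Finset.sum_add_distrib, ← Finset.sum_add_distrib, ← Finset.sum_add_distrib]
  exact Finset.sum_congr rfl fun l _ => key _ _
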